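/- Let ρ be a permutation of {1,…,n} with 321-height vector (h_1,…,h_n), and suppose ρ has exactly r occurrences of the pattern (3,2,1), where r ≥ 1. Then the total depth of down-jumps s = Σ_{i=1}^{n−1} max(h_i − h_{i+1} − 1, 0) satisfies 1 ≤ s ≤ r. (That is, a permutation with exactly r ≥ 1 occurrences of (3,2,1) is mapped by ψ_{(3,2,1)} to a generalized Dyck path with at least one and at most r down-jumps.) -/

import Mathlib

open scoped Classical
open Finset

/-- An entry `ρ i` is a left-to-right maximum if it is greater than all entries to its left. -/
def IsLRMax {n : ℕ} (ρ : Equiv.Perm (Fin n)) (i : Fin n) : Prop :=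
  ∀ j, j < i → ρ j < ρ i

/-- `m` is the last left-to-right maximum of `ρ` strictly before position `i`. -/
def IsLastLRMaxBefore {n : ℕ} (ρ : Equiv.Perm (Fin n)) (m i : Fin n) : Prop :=
  m < i ∧ IsLRMax ρ m ∧ ∀ p, m < p → p < i → ¬ IsLRMax ρ p

/-- The 321-height of entry `i` of `ρ`:  if `ρ i` is a left-to-right maximum, the number of
entries to the right of `i` that are smaller than `ρ i`; otherwise the number of entries
`ρ k` to the right of `i` with `ρ i < ρ k < ρ m`, where `ρ m` is the last left-to-right
maximum before position `i`. -/
noncomputable def height321 {n : ℕ} (ρ : Equiv.Perm (Fin n)) (i : Fin n) : ℕ :=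
  if IsLRMax ρ i then
    (Finset.univ.filter (fun k => i < k ∧ ρ k < ρ i)).card
  else
    (Finset.univ.filter (fun k => i < k ∧ ρ i < ρ k ∧
      ∃ m, IsLastLRMaxBefore ρ m i ∧ ρ k < ρ m)).card

variable {n : ℕ} {ρ : Equiv.Perm (Fin n)}

lemma lrmax_of_not {i : Fin n} (hi : ¬ IsLRMax ρ i) : ∃ j, j < i ∧ ρ i < ρ j := by
  simp only [IsLRMax, not_forall, not_lt] at hi
  obtain ⟨j, hj, hji⟩ := hi
  refine ⟨j, hj, lt_of_le_of_ne hji ?_⟩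
  intro he
  exact absurd (ρ.injective he) (ne_of_gt hj)

lemma exists_last {i : Fin n} (hi : ¬ IsLRMax ρ i) : ∃ m, IsLastLRMaxBefore ρ m i := by
  obtain ⟨j, hj, _⟩ := lrmax_of_not hi
  set z : Fin n := ⟨0, lt_of_le_of_lt (Nat.zero_le _) i.isLt⟩ with hz
  have hzmax : IsLRMax ρ z := by
    intro j hj
    exact absurd hj (by simp [hz, Fin.lt_def])
  have hzi : z < i := by
    have := hj
    simp only [Fin.lt_def] at *
    show (0:ℕ) < (i:ℕ)
    omega
  have hne : (univ.filter (fun p => p < i ∧ IsLRMax ρ p)).Nonempty :=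
    ⟨z, by simp [hzi, hzmax]⟩
  set m := (univ.filter (fun p => p < i ∧ IsLRMax ρ p)).max' hne with hm
  have hmem := (univ.filter (fun p => p < i ∧ IsLRMax ρ p)).max'_mem hne
  simp only [mem_filter, mem_univ, true_and] at hmem
  refine ⟨m, hmem.1, hmem.2, ?_⟩
  intro p hmp hpi hpmax
  have : p ≤ m := Finset.le_max' _ p (by simp [hpi, hpmax])
  exact absurd hmp (not_lt.mpr this)

lemma unique_last {m m' i : Fin n} (h1 : IsLastLRMaxBefore ρ m i)
    (h2 : IsLastLRMaxBefore ρ m' i) : m = m' := by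
  rcases lt_trichotomy m m' with h | h | h
  · exact absurd h2.2.1 (h1.2.2 m' h h2.1)
  · exact h
  · exact absurd h1.2.1 (h2.2.2 m h h1.1)

lemma last_ge {m i : Fin n} (hm : IsLastLRMaxBefore ρ m i) :
    ∀ j, j < i → ρ j ≤ ρ m := by
  obtain ⟨hmi, hmax, hlast⟩ := hm
  have hne : (univ.filter (fun j => j < i)).Nonempty := ⟨m, by simp [hmi]⟩
  obtain ⟨j0, hj0mem, hj0⟩ := Finset.exists_max_image _ (fun j => ρ j) hne
  simp only [mem_filter, mem_univ, true_and] at hj0mem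
  have hj0max : IsLRMax ρ j0 := by
    intro j hj
    have hle : ρ j ≤ ρ j0 := hj0 j (by simp [mem_filter, lt_trans hj hj0mem])
    refine lt_of_le_of_ne hle ?_
    intro he
    exact absurd (ρ.injective he) (ne_of_lt hj)
  have hj0m : j0 ≤ m := by
    by_contra hc
    exact hlast j0 (not_le.mp hc) hj0mem hj0max
  have hval : ρ j0 ≤ ρ m := by
    rcases lt_or_eq_of_le hj0m with h | h
    · exact le_of_lt (hmax j0 h)
    · rw [h]
  intro j hj
  exact le_trans (hj0 j (by simp [mem_filter, hj])) hval

lemma lt_last {m i : Fin n} (hi : ¬ IsLRMax ρ i) (hm : IsLastLRMaxBefore ρ m i) :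
    ρ i < ρ m := by
  obtain ⟨j, hj, hji⟩ := lrmax_of_not hi
  exact lt_of_lt_of_le hji (last_ge hm j hj)

lemma height_eq_of_last {i m : Fin n} (hi : ¬ IsLRMax ρ i) (hm : IsLastLRMaxBefore ρ m i) :
    height321 ρ i = (univ.filter (fun k => i < k ∧ ρ i < ρ k ∧ ρ k < ρ m)).card := by
  rw [height321, if_neg hi]
  congr 1
  apply Finset.filter_congr
  intro k _
  constructor
  · rintro ⟨h1, h2, m', hm', h3⟩
    exact ⟨h1, h2, (unique_last hm' hm) ▸ h3⟩
  · rintro ⟨h1, h2, h3⟩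
    exact ⟨h1, h2, m, hm, h3⟩

lemma succ_gt {p q k : Fin n} (hq : (q:ℕ) = (p:ℕ) + 1) (h1 : p < k) (h2 : k ≠ q) :
    q < k := by
  rw [Fin.lt_def] at *
  have := (Fin.ext_iff (a := k) (b := q)).not.mp h2
  omega

lemma lt_succ {p q : Fin n} (hq : (q:ℕ) = (p:ℕ) + 1) : p < q := by
  rw [Fin.lt_def]; omega

lemma last_of_lrmax {p q : Fin n} (hq : (q:ℕ) = (p:ℕ) + 1) (hp : IsLRMax ρ p) :
    IsLastLRMaxBefore ρ p q := by
  refine ⟨lt_succ hq, hp, ?_⟩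
  intro p' h1 h2
  rw [Fin.lt_def] at h1 h2
  omega

lemma last_succ {p q m : Fin n} (hq : (q:ℕ) = (p:ℕ) + 1) (hp : ¬ IsLRMax ρ p)
    (hm : IsLastLRMaxBefore ρ m p) : IsLastLRMaxBefore ρ m q := by
  obtain ⟨hmp, hmax, hlast⟩ := hm
  refine ⟨lt_trans hmp (lt_succ hq), hmax, ?_⟩
  intro p' hmp' hp'q
  have hv : (p':ℕ) < (p:ℕ) ∨ (p':ℕ) = (p:ℕ) := by
    rw [Fin.lt_def] at hp'q
    omega
  rcases hv with hlt | heq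
  · exact hlast p' hmp' (by rwa [Fin.lt_def])
  · rw [Fin.ext heq]; exact hp

lemma height_eq_of_lrmax {i : Fin n} (hi : IsLRMax ρ i) :
    height321 ρ i = (univ.filter (fun k => i < k ∧ ρ k < ρ i)).card := by
  simp only [height321, if_pos hi]

lemma step1 {p q : Fin n} (hq : (q:ℕ) = (p:ℕ) + 1) (hqmax : IsLRMax ρ q) :
    height321 ρ p ≤ height321 ρ q + 1 := by
  rw [height_eq_of_lrmax hqmax]
  set B := univ.filter (fun k => q < k ∧ ρ k < ρ q) with hB
  by_cases hp : IsLRMax ρ p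
  · rw [height_eq_of_lrmax hp]
    have hsub : univ.filter (fun k => p < k ∧ ρ k < ρ p) ⊆ insert q B := by
      intro k hk
      simp only [mem_filter, mem_univ, true_and] at hk
      by_cases hkq : k = q
      · simp [hkq]
      · have h1 : q < k := succ_gt hq hk.1 hkq
        have h2 : ρ k < ρ q := lt_trans hk.2 (hqmax p (lt_succ hq))
        simp [Finset.mem_insert, hB, h1, h2]
    calc (univ.filter (fun k => p < k ∧ ρ k < ρ p)).card
        ≤ (insert q B).card := Finset.card_le_card hsub
      _ ≤ B.card + 1 := Finset.card_insert_le _ _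
  · obtain ⟨m, hm⟩ := exists_last hp
    rw [height_eq_of_last hp hm]
    have hmq : ρ m < ρ q := hqmax m (lt_trans hm.1 (lt_succ hq))
    have hsub : univ.filter (fun k => p < k ∧ ρ p < ρ k ∧ ρ k < ρ m) ⊆ B := by
      intro k hk
      simp only [mem_filter, mem_univ, true_and] at hk
      have h2 : ρ k < ρ q := lt_trans hk.2.2 hmq
      have hkq : k ≠ q := fun he => absurd (he ▸ h2) (lt_irrefl _)
      simp [hB, succ_gt hq hk.1 hkq, h2]
    calc (univ.filter (fun k => p < k ∧ ρ p < ρ k ∧ ρ k < ρ m)).card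
        ≤ B.card := Finset.card_le_card hsub
      _ ≤ B.card + 1 := Nat.le_succ _

lemma step2 {p q : Fin n} (hq : (q:ℕ) = (p:ℕ) + 1) (hqn : ¬ IsLRMax ρ q) :
    height321 ρ p ≤ height321 ρ q + 1 +
      (univ.filter (fun k => q < k ∧ ρ k < ρ q)).card := by
  set C := univ.filter (fun k => q < k ∧ ρ k < ρ q) with hC
  by_cases hp : IsLRMax ρ p
  · have hmq : IsLastLRMaxBefore ρ p q := last_of_lrmax hq hp
    rw [height_eq_of_lrmax hp, height_eq_of_last hqn hmq]
    set B := univ.filter (fun k => q < k ∧ ρ q < ρ k ∧ ρ k < ρ p) with hB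
    have hsub : univ.filter (fun k => p < k ∧ ρ k < ρ p) ⊆ insert q (B ∪ C) := by
      intro k hk
      simp only [mem_filter, mem_univ, true_and] at hk
      by_cases hkq : k = q
      · simp [hkq]
      · have h1 : q < k := succ_gt hq hk.1 hkq
        rcases lt_or_gt_of_ne (fun he => hkq (ρ.injective he) : ρ k ≠ ρ q) with h2 | h2
        · simp [Finset.mem_insert, Finset.mem_union, hC, h1, h2]
        · simp [Finset.mem_insert, Finset.mem_union, hB, h1, h2, hk.2]
    calc (univ.filter (fun k => p < k ∧ ρ k < ρ p)).card
        ≤ (insert q (B ∪ C)).card := Finset.card_le_card hsub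
      _ ≤ (B ∪ C).card + 1 := Finset.card_insert_le _ _
      _ ≤ B.card + C.card + 1 := by
          have := Finset.card_union_le B C
          omega
      _ = B.card + 1 + C.card := by ring
  · obtain ⟨m, hm⟩ := exists_last hp
    have hmq : IsLastLRMaxBefore ρ m q := last_succ hq hp hm
    rw [height_eq_of_last hp hm, height_eq_of_last hqn hmq]
    set B := univ.filter (fun k => q < k ∧ ρ q < ρ k ∧ ρ k < ρ m) with hB
    have hsub : univ.filter (fun k => p < k ∧ ρ p < ρ k ∧ ρ k < ρ m)
        ⊆ insert q (B ∪ C) := by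
      intro k hk
      simp only [mem_filter, mem_univ, true_and] at hk
      by_cases hkq : k = q
      · simp [hkq]
      · have h1 : q < k := succ_gt hq hk.1 hkq
        rcases lt_or_gt_of_ne (fun he => hkq (ρ.injective he) : ρ k ≠ ρ q) with h2 | h2
        · simp [Finset.mem_insert, Finset.mem_union, hC, h1, h2]
        · simp [Finset.mem_insert, Finset.mem_union, hB, h1, h2, hk.2.2]
    calc (univ.filter (fun k => p < k ∧ ρ p < ρ k ∧ ρ k < ρ m)).card
        ≤ (insert q (B ∪ C)).card := Finset.card_le_card hsub
      _ ≤ (B ∪ C).card + 1 := Finset.card_insert_le _ _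
      _ ≤ B.card + C.card + 1 := by
          have := Finset.card_union_le B C
          omega
      _ = B.card + 1 + C.card := by ring


/-- If `ρ` has exactly `r ≥ 1` occurrences of the pattern (3,2,1), then the total depth of
down-jumps `s = Σ_{i=1}^{n-1} max (h_i - h_{i+1} - 1) 0` of the path `ψ_(3,2,1)(ρ)`
(computed from the 321-height vector `h`, here via truncated subtraction) satisfies
`1 ≤ s ≤ r`. -/

theorem jumpsum_le_card_occurrences_321 {n r : ℕ} (hr : 1 ≤ r) (ρ : Equiv.Perm (Fin n))
    (h : ℕ → ℕ) (hh : ∀ i : Fin n, h (i : ℕ) = height321 ρ i)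
    (hocc : (Finset.univ.filter (fun t : Fin n × Fin n × Fin n =>
        t.1 < t.2.1 ∧ t.2.1 < t.2.2 ∧ ρ t.2.2 < ρ t.2.1 ∧ ρ t.2.1 < ρ t.1)).card = r) :
    1 ≤ ∑ i ∈ Finset.range (n - 1), (h i - h (i + 1) - 1) ∧
    ∑ i ∈ Finset.range (n - 1), (h i - h (i + 1) - 1) ≤ r := by
  set Ω := Finset.univ.filter (fun t : Fin n × Fin n × Fin n =>
      t.1 < t.2.1 ∧ t.2.1 < t.2.2 ∧ ρ t.2.2 < ρ t.2.1 ∧ ρ t.2.1 < ρ t.1) with hΩ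
  -- Upper bound
  have hub : ∀ i ∈ Finset.range (n-1), h i - h (i+1) - 1 ≤
      (Ω.filter (fun t => ((t.2.1 : Fin n) : ℕ) = i + 1)).card := by
    intro i hi
    rw [Finset.mem_range] at hi
    have hi1 : i + 1 < n := by omega
    have hi0 : i < n := by omega
    set p : Fin n := ⟨i, hi0⟩ with hp
    set q : Fin n := ⟨i+1, hi1⟩ with hqdef
    have hq : (q:ℕ) = (p:ℕ) + 1 := rfl
    have hhp : h i = height321 ρ p := hh p
    have hhq : h (i+1) = height321 ρ q := hh q
    rw [hhp, hhq]
    by_cases hqm : IsLRMax ρ q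
    · have := step1 hq hqm
      omega
    · have hstep := step2 hq hqm
      obtain ⟨m, hm⟩ := exists_last hqm
      have hmq : ρ q < ρ m := lt_last hqm hm
      have hinj : (univ.filter (fun k => q < k ∧ ρ k < ρ q)).card ≤
          (Ω.filter (fun t => ((t.2.1 : Fin n) : ℕ) = i + 1)).card := by
        apply Finset.card_le_card_of_injOn (fun k => (m, q, k))
        · intro k hk
          simp only [Finset.mem_coe, mem_filter, mem_univ, true_and] at hk
          rw [Finset.mem_coe, Finset.mem_filter]
          refine ⟨?_, rfl⟩
          rw [hΩ, Finset.mem_filter]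
          exact ⟨Finset.mem_univ _, hm.1, hk.1, hk.2, hmq⟩
        · intro a _ b _ hab
          exact congrArg (fun t : Fin n × Fin n × Fin n => t.2.2) hab
      omega
  have hub2 : ∑ i ∈ Finset.range (n-1), (h i - h (i+1) - 1) ≤ r := by
    have hdisj : ∀ x ∈ Finset.range (n-1), ∀ y ∈ Finset.range (n-1), x ≠ y →
        Disjoint (Ω.filter (fun t => ((t.2.1 : Fin n) : ℕ) = x + 1))
          (Ω.filter (fun t => ((t.2.1 : Fin n) : ℕ) = y + 1)) := by
      intro x _ y _ hxy
      rw [Finset.disjoint_left]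
      intro t ht1 ht2
      simp only [Finset.mem_filter] at ht1 ht2
      omega
    calc ∑ i ∈ Finset.range (n-1), (h i - h (i+1) - 1)
        ≤ ∑ i ∈ Finset.range (n-1),
            (Ω.filter (fun t => ((t.2.1 : Fin n) : ℕ) = i + 1)).card :=
          Finset.sum_le_sum hub
      _ = ((Finset.range (n-1)).biUnion
            (fun i => Ω.filter (fun t => ((t.2.1 : Fin n) : ℕ) = i + 1))).card :=
          (Finset.card_biUnion hdisj).symm
      _ ≤ Ω.card := by
          apply Finset.card_le_card
          intro t ht
          rw [Finset.mem_biUnion] at ht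
          obtain ⟨x, _, ht⟩ := ht
          exact (Finset.mem_filter.mp ht).1
      _ = r := hocc
  -- Lower bound
  have hne : Ω.Nonempty := by
    rw [← Finset.card_pos, hocc]; omega
  obtain ⟨t0, ht0, hmin⟩ := Finset.exists_min_image Ω (fun t => ((t.2.1 : Fin n) : ℕ)) hne
  obtain ⟨a, b, c⟩ := t0
  simp only [hΩ, Finset.mem_filter, Finset.mem_univ, true_and] at ht0
  obtain ⟨hab, hbc, hcb, hba⟩ := ht0
  have hav : (a:ℕ) < b := hab
  have hbv : (b:ℕ) < c := hbc
  have hcv : (c:ℕ) < n := c.isLt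
  have hi0 : (b:ℕ) - 1 < n := by omega
  set p : Fin n := ⟨(b:ℕ) - 1, hi0⟩ with hpdef
  have hq : (b:ℕ) = (p:ℕ) + 1 := by simp [hpdef]; omega
  have hqn : ¬ IsLRMax ρ b := fun hmax => lt_asymm hba (hmax a hab)
  have hnomid : ∀ m' k : Fin n, m' < p → p < k → ρ k < ρ p → ρ p < ρ m' → False := by
    intro m' k h1 h2 h3 h4
    have hmem' : (m', p, k) ∈ Ω := by
      rw [hΩ, Finset.mem_filter]
      exact ⟨Finset.mem_univ _, h1, h2, h3, h4⟩
    have hle := hmin (m', p, k) hmem'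
    simp only at hle
    omega
  have hkey : height321 ρ b + 2 ≤ height321 ρ p := by
    by_cases hp : IsLRMax ρ p
    · have hmq : IsLastLRMaxBefore ρ p b := last_of_lrmax hq hp
      rw [height_eq_of_lrmax hp, height_eq_of_last hqn hmq]
      set B := univ.filter (fun k => b < k ∧ ρ b < ρ k ∧ ρ k < ρ p) with hB
      have hqltp : ρ b < ρ p := by
        have hap : (a:ℕ) ≤ (p:ℕ) := by omega
        rcases eq_or_lt_of_le hap with he | hl
        · have : a = p := Fin.ext he
          exact this ▸ hba
        · exact lt_trans hba (hp a (by rwa [Fin.lt_def]))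
      have hsub : insert b (insert c B) ⊆
          univ.filter (fun k => p < k ∧ ρ k < ρ p) := by
        intro k hk
        simp only [Finset.mem_insert, hB, mem_filter, mem_univ, true_and] at hk ⊢
        rcases hk with rfl | rfl | hk
        · exact ⟨lt_succ hq, hqltp⟩
        · exact ⟨lt_trans (lt_succ hq) hbc, lt_trans hcb hqltp⟩
        · exact ⟨lt_trans (lt_succ hq) hk.1, hk.2.2⟩
      have hbni : b ∉ insert c B := by
        simp only [Finset.mem_insert, hB, mem_filter, mem_univ, true_and]
        push_neg
        refine ⟨?_, fun hbb => absurd hbb (lt_irrefl b)⟩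
        intro he; rw [he] at hbc; exact absurd hbc (lt_irrefl c)
      have hcni : c ∉ B := by
        simp only [hB, mem_filter, mem_univ, true_and]
        push_neg
        intro _ hc2
        exact absurd hcb (not_lt.mpr (le_of_lt hc2))
      calc B.card + 2 = (insert b (insert c B)).card := by
            rw [Finset.card_insert_of_notMem hbni, Finset.card_insert_of_notMem hcni]
        _ ≤ _ := Finset.card_le_card hsub
    · obtain ⟨m, hm⟩ := exists_last hp
      have hmq : IsLastLRMaxBefore ρ m b := last_succ hq hp hm
      have hρpm : ρ p < ρ m := lt_last hp hm
      have hpb : p ≠ b := by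
        intro he; rw [he] at hq; omega
      have hpq : ρ p < ρ b := by
        rcases lt_or_gt_of_ne (fun he => hpb (ρ.injective he)) with hlt | hgt
        · exact hlt
        · exact absurd (hnomid m b hm.1 (lt_succ hq) hgt hρpm) (fun f => f)
      have hpc : ρ p < ρ c := by
        have hpc' : p ≠ c := by
          intro he
          rw [Fin.ext_iff] at he
          omega
        rcases lt_or_gt_of_ne (fun he => hpc' (ρ.injective he)) with hlt | hgt
        · exact hlt
        · exact absurd (hnomid m c hm.1 (by rw [Fin.lt_def]; omega) hgt hρpm)
            (fun f => f)
      rw [height_eq_of_last hp hm, height_eq_of_last hqn hmq]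
      set B := univ.filter (fun k => b < k ∧ ρ b < ρ k ∧ ρ k < ρ m) with hB
      have hsub : insert b (insert c B) ⊆
          univ.filter (fun k => p < k ∧ ρ p < ρ k ∧ ρ k < ρ m) := by
        intro k hk
        simp only [Finset.mem_insert, hB, mem_filter, mem_univ, true_and] at hk ⊢
        rcases hk with rfl | rfl | hk
        · exact ⟨lt_succ hq, hpq, lt_last hqn hmq⟩
        · exact ⟨lt_trans (lt_succ hq) hbc, hpc,
            lt_trans hcb (lt_last hqn hmq)⟩
        · exact ⟨lt_trans (lt_succ hq) hk.1, lt_trans hpq hk.2.1, hk.2.2⟩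
      have hbni : b ∉ insert c B := by
        simp only [Finset.mem_insert, hB, mem_filter, mem_univ, true_and]
        push_neg
        refine ⟨?_, fun hbb => absurd hbb (lt_irrefl b)⟩
        intro he; rw [he] at hbc; exact absurd hbc (lt_irrefl c)
      have hcni : c ∉ B := by
        simp only [hB, mem_filter, mem_univ, true_and]
        push_neg
        intro _ hc2
        exact absurd hcb (not_lt.mpr (le_of_lt hc2))
      calc B.card + 2 = (insert b (insert c B)).card := by
            rw [Finset.card_insert_of_notMem hbni, Finset.card_insert_of_notMem hcni]
        _ ≤ _ := Finset.card_le_card hsub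
  have hmem : (b:ℕ) - 1 ∈ Finset.range (n-1) := by
    rw [Finset.mem_range]; omega
  have hterm : 1 ≤ h ((b:ℕ) - 1) - h ((b:ℕ) - 1 + 1) - 1 := by
    have h1 : h ((b:ℕ) - 1) = height321 ρ p := hh p
    have h2 : (b:ℕ) - 1 + 1 = (b:ℕ) := by omega
    have h3 : h ((b:ℕ) - 1 + 1) = height321 ρ b := by rw [h2]; exact hh b
    omega
  refine ⟨?_, hub2⟩
  calc 1 ≤ h ((b:ℕ) - 1) - h ((b:ℕ) - 1 + 1) - 1 := hterm
    _ ≤ ∑ i ∈ Finset.range (n - 1), (h i - h (i + 1) - 1) :=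
      Finset.single_le_sum (f := fun i => h i - h (i + 1) - 1) (fun i _ => Nat.zero_le _) hmem
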